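/- Let (Ω, P) be a probability space and x : Ω → ℝ^d a random vector with E[x] = 0 such that the matrix H := E[x xᵀ] exists (each entry integrable), H ⪰ μ·I for some μ > 0, and E[‖x‖₂² · x xᵀ] ⪯ R²·H for some R > 0 (each entry of ‖x‖₂² x xᵀ integrable). Then for every step size η with 0 < η ≤ 1/R² and every real symmetric positive semidefinite d×d matrix M, one has E[tr((I − η x xᵀ)·M·(I − η x xᵀ))] ≤ (1 − η μ)·tr(M). -/

import Mathlib

open MeasureTheory Matrix

lemma psd_trace_nonneg {d : ℕ} {A : Matrix (Fin d) (Fin d) ℝ} (hA : A.PosSemidef) :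
    0 ≤ A.trace := by
  rw [Matrix.trace]
  apply Finset.sum_nonneg
  intro i _
  exact hA.diag_nonneg

lemma trace_mul_nonneg' {d : ℕ} {A B : Matrix (Fin d) (Fin d) ℝ}
    (hA : A.PosSemidef) (hB : B.PosSemidef) : 0 ≤ (A * B).trace := by
  open scoped MatrixOrder in
  obtain ⟨S, rfl⟩ := CStarAlgebra.nonneg_iff_eq_star_mul_self.mp hA.nonneg
  have key : (star S * S * B).trace = (S * B * Sᴴ).trace := by
    rw [Matrix.star_eq_conjTranspose, Matrix.trace_mul_cycle, Matrix.trace_mul_comm,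
      ← Matrix.mul_assoc]
  rw [key]
  exact psd_trace_nonneg (hB.mul_mul_conjTranspose_same S)

lemma vmv_mul_vmv {d : ℕ} (v : Fin d → ℝ) :
    Matrix.vecMulVec v v * Matrix.vecMulVec v v = (∑ k, v k ^ 2) • Matrix.vecMulVec v v := by
  ext i j
  simp only [Matrix.mul_apply, Matrix.vecMulVec_apply, Matrix.smul_apply, smul_eq_mul,
    Finset.sum_mul]
  congr 1; ext k; ring

lemma trace_vmv_mul {d : ℕ} (v : Fin d → ℝ) (M : Matrix (Fin d) (Fin d) ℝ) :
    (Matrix.vecMulVec v v * M).trace = ∑ i, ∑ j, M i j * (v j * v i) := by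
  simp only [Matrix.trace, Matrix.diag, Matrix.mul_apply, Matrix.vecMulVec_apply]
  rw [Finset.sum_comm]
  congr 1; ext i; congr 1; ext j; ring

lemma pointwise_trace {d : ℕ} (η : ℝ) (v : Fin d → ℝ) (M : Matrix (Fin d) (Fin d) ℝ) :
    (((1 : Matrix (Fin d) (Fin d) ℝ) - η • Matrix.vecMulVec v v) * M *
      ((1 : Matrix (Fin d) (Fin d) ℝ) - η • Matrix.vecMulVec v v)).trace
    = M.trace - 2 * η * (∑ i, ∑ j, M i j * (v j * v i))
      + η ^ 2 * ((∑ k, v k ^ 2) * (∑ i, ∑ j, M i j * (v j * v i))) := by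
  set A := Matrix.vecMulVec v v with hA
  have expand : ((1 : Matrix (Fin d) (Fin d) ℝ) - η • A) * M * (1 - η • A)
      = M - η • (A * M) - η • (M * A) + (η * η) • (A * M * A) := by
    simp only [sub_mul, mul_sub, one_mul, mul_one, Matrix.smul_mul, Matrix.mul_smul, smul_smul]
    abel
  rw [expand]
  simp only [Matrix.trace_add, Matrix.trace_sub, Matrix.trace_smul, smul_eq_mul]
  have h1 : (A * M).trace = ∑ i, ∑ j, M i j * (v j * v i) := trace_vmv_mul v M
  have h2 : (M * A).trace = ∑ i, ∑ j, M i j * (v j * v i) := by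
    rw [Matrix.trace_mul_comm]; exact trace_vmv_mul v M
  have h3 : (A * M * A).trace = (∑ k, v k ^ 2) * (∑ i, ∑ j, M i j * (v j * v i)) := by
    rw [Matrix.trace_mul_cycle, vmv_mul_vmv, Matrix.smul_mul, Matrix.trace_smul,
      smul_eq_mul, trace_vmv_mul]
  rw [h1, h2, h3]; ring

theorem expected_trace_contraction {Ω : Type*} [MeasurableSpace Ω]
    (P : Measure Ω) [IsProbabilityMeasure P]
    (d : ℕ) (x : Ω → Fin d → ℝ)
    (hmean_int : ∀ i, Integrable (fun ω => x ω i) P)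
    (hmean : ∀ i, (∫ ω, x ω i ∂P) = 0)
    (H : Matrix (Fin d) (Fin d) ℝ)
    (hH_int : ∀ i j, Integrable (fun ω => x ω i * x ω j) P)
    (hH : ∀ i j, H i j = ∫ ω, x ω i * x ω j ∂P)
    (μ : ℝ) (hμ : 0 < μ)
    (hHμ : (H - μ • (1 : Matrix (Fin d) (Fin d) ℝ)).PosSemidef)
    (R : ℝ) (hR : 0 < R)
    (hM4_int : ∀ i j, Integrable (fun ω => (∑ k, x ω k ^ 2) * (x ω i * x ω j)) P)
    (hM4 : (R ^ 2 • H -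
        Matrix.of fun i j => ∫ ω, (∑ k, x ω k ^ 2) * (x ω i * x ω j) ∂P).PosSemidef)
    (η : ℝ) (hη0 : 0 < η) (hη : η ≤ 1 / R ^ 2)
    (M : Matrix (Fin d) (Fin d) ℝ) (hM : M.PosSemidef) :
    (∫ ω, Matrix.trace
        (((1 : Matrix (Fin d) (Fin d) ℝ) - η • Matrix.vecMulVec (x ω) (x ω)) * M *
          ((1 : Matrix (Fin d) (Fin d) ℝ) - η • Matrix.vecMulVec (x ω) (x ω))) ∂P)
      ≤ (1 - η * μ) * Matrix.trace M := by
  set G : Matrix (Fin d) (Fin d) ℝ :=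
    Matrix.of fun i j => ∫ ω, (∑ k, x ω k ^ 2) * (x ω i * x ω j) ∂P with hG
  set Q : Ω → ℝ := fun ω => ∑ i, ∑ j, M i j * (x ω j * x ω i) with hQdef
  have hQ_int : Integrable Q P := by
    apply integrable_finset_sum; intro i _
    apply integrable_finset_sum; intro j _
    exact (hH_int j i).const_mul _
  have hSQfun : (fun ω => (∑ k, x ω k ^ 2) * Q ω)
      = fun ω => ∑ i, ∑ j, M i j * ((∑ k, x ω k ^ 2) * (x ω j * x ω i)) := by
    funext ω
    rw [hQdef, Finset.mul_sum]
    congr 1; ext i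
    rw [Finset.mul_sum]
    congr 1; ext j; ring
  have hSQ_int : Integrable (fun ω => (∑ k, x ω k ^ 2) * Q ω) P := by
    rw [hSQfun]
    apply integrable_finset_sum; intro i _
    apply integrable_finset_sum; intro j _
    exact (hM4_int j i).const_mul _
  have hQ_val : (∫ ω, Q ω ∂P) = (M * H).trace := by
    rw [hQdef]
    rw [integral_finset_sum _ (fun i _ => by
      exact integrable_finset_sum _ (fun j _ => (hH_int j i).const_mul _))]
    simp only [Matrix.trace, Matrix.diag, Matrix.mul_apply]
    congr 1; ext i
    rw [integral_finset_sum _ (fun j _ => (hH_int j i).const_mul _)]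
    congr 1; ext j
    rw [integral_const_mul, hH]
  have hSQ_val : (∫ ω, (∑ k, x ω k ^ 2) * Q ω ∂P) = (M * G).trace := by
    rw [hSQfun]
    rw [integral_finset_sum _ (fun i _ => by
      exact integrable_finset_sum _ (fun j _ => (hM4_int j i).const_mul _))]
    simp only [Matrix.trace, Matrix.diag, Matrix.mul_apply]
    congr 1; ext i
    rw [integral_finset_sum _ (fun j _ => (hM4_int j i).const_mul _)]
    congr 1; ext j
    rw [integral_const_mul, hG]
    rfl
  have key : (∫ ω, Matrix.trace
        (((1 : Matrix (Fin d) (Fin d) ℝ) - η • Matrix.vecMulVec (x ω) (x ω)) * M *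
          ((1 : Matrix (Fin d) (Fin d) ℝ) - η • Matrix.vecMulVec (x ω) (x ω))) ∂P)
      = M.trace - 2 * η * (M * H).trace + η ^ 2 * (M * G).trace := by
    have hfun : (fun ω => Matrix.trace
        (((1 : Matrix (Fin d) (Fin d) ℝ) - η • Matrix.vecMulVec (x ω) (x ω)) * M *
          ((1 : Matrix (Fin d) (Fin d) ℝ) - η • Matrix.vecMulVec (x ω) (x ω))))
        = fun ω => M.trace - 2 * η * Q ω + η ^ 2 * ((∑ k, x ω k ^ 2) * Q ω) := by
      funext ω
      exact pointwise_trace η (x ω) M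
    rw [hfun]
    have hI1 : Integrable (fun ω => M.trace - 2 * η * Q ω) P :=
      (integrable_const _).sub (hQ_int.const_mul _)
    have hI2 : Integrable (fun ω => η ^ 2 * ((∑ k, x ω k ^ 2) * Q ω)) P :=
      hSQ_int.const_mul _
    rw [integral_add hI1 hI2,
      integral_sub (integrable_const _) (hQ_int.const_mul _), integral_const,
      integral_const_mul, integral_const_mul, hQ_val, hSQ_val]
    simp
  rw [key]
  -- inequalities
  have hT0 : 0 ≤ (M * H).trace := by
    have h1 : 0 ≤ (M * (H - μ • 1)).trace := trace_mul_nonneg' hM hHμ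
    have h2 : 0 ≤ M.trace := psd_trace_nonneg hM
    have h3 : (M * (H - μ • 1)).trace = (M * H).trace - μ * M.trace := by
      rw [mul_sub, Matrix.trace_sub, Matrix.mul_smul, Matrix.trace_smul, mul_one,
        smul_eq_mul]
    nlinarith
  have hμT : μ * M.trace ≤ (M * H).trace := by
    have h1 : 0 ≤ (M * (H - μ • 1)).trace := trace_mul_nonneg' hM hHμ
    have h3 : (M * (H - μ • 1)).trace = (M * H).trace - μ * M.trace := by
      rw [mul_sub, Matrix.trace_sub, Matrix.mul_smul, Matrix.trace_smul, mul_one,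
        smul_eq_mul]
    linarith [h3 ▸ h1]
  have hGT : (M * G).trace ≤ R ^ 2 * (M * H).trace := by
    have h1 : 0 ≤ (M * (R ^ 2 • H - G)).trace := trace_mul_nonneg' hM hM4
    have h3 : (M * (R ^ 2 • H - G)).trace = R ^ 2 * (M * H).trace - (M * G).trace := by
      rw [mul_sub, Matrix.trace_sub, Matrix.mul_smul, Matrix.trace_smul, smul_eq_mul]
    linarith [h3 ▸ h1]
  have hηR : η * R ^ 2 ≤ 1 := by
    rw [div_eq_mul_inv, one_mul] at hη
    calc η * R ^ 2 ≤ (R ^ 2)⁻¹ * R ^ 2 := by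
          apply mul_le_mul_of_nonneg_right hη (by positivity)
      _ = 1 := by field_simp
  nlinarith [mul_le_mul_of_nonneg_left hGT (sq_nonneg η),
    mul_le_mul_of_nonneg_left hμT (le_of_lt hη0),
    mul_nonneg (le_of_lt hη0) hT0,
    mul_le_mul_of_nonneg_right hηR (mul_nonneg (le_of_lt hη0) hT0)]
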